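/- Let f satisfy Assumption 1 and let the approximation functions u_i satisfy Assumption 2. Then every u-strong local minimizer z ∈ 𝓛_u satisfies ∇_{(j)} f(z) = 0 for all j ∈ I(z); hence 𝓛_u ⊆ 𝒯_f, i.e. every u-strong local minimizer is a basic local minimizer (and thus a local minimum) of F. -/

import Mathlib

open scoped RealInnerProductSpace
open Finset

/-- The weighted ℓ₀ quasinorm `‖x‖_{0,λ}`. -/
noncomputable def l0norm {n N : ℕ} (blk : Fin n → Fin N) (lam : Fin N → ℝ)
    (x : EuclideanSpace ℝ (Fin n)) : ℝ :=
  ∑ j, if x j ≠ 0 then lam (blk j) else 0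

/-- Membership in `I(x) = supp(x) ∪ {j ∈ 𝒮ᵢ : λᵢ = 0}`. -/
def InIset {n N : ℕ} (blk : Fin n → Fin N) (lam : Fin N → ℝ)
    (x : EuclideanSpace ℝ (Fin n)) (j : Fin n) : Prop :=
  x j ≠ 0 ∨ lam (blk j) = 0

/-- Block restriction `xᵢ = Uᵢᵀ x`. -/
noncomputable def blkProj {n N : ℕ} (blk : Fin n → Fin N) (i : Fin N)
    (x : EuclideanSpace ℝ (Fin n)) : EuclideanSpace ℝ {j : Fin n // blk j = i} :=
  WithLp.toLp 2 (fun j => x j.1)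

/-- Block embedding `Uᵢ hᵢ`. -/
noncomputable def blkEmbed {n N : ℕ} (blk : Fin n → Fin N) (i : Fin N)
    (v : EuclideanSpace ℝ {j : Fin n // blk j = i}) : EuclideanSpace ℝ (Fin n) :=
  WithLp.toLp 2 (fun j => if h : blk j = i then v ⟨j, h⟩ else 0)

/-- Assumption 2 on the family of approximation functions `uᵢ(·;·)`, with gradients
(in the first argument) `guᵢ`, Lipschitz constants `Mᵢ > Lᵢ` and curvature constants
`μᵢ ∈ (0, Mᵢ - Lᵢ]`. -/
structure ApproxAssumption {n N : ℕ} (blk : Fin n → Fin N)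
    (f : EuclideanSpace ℝ (Fin n) → ℝ)
    (g : EuclideanSpace ℝ (Fin n) → EuclideanSpace ℝ (Fin n))
    (L : Fin N → ℝ)
    (u : ∀ i : Fin N, EuclideanSpace ℝ {j : Fin n // blk j = i} →
      EuclideanSpace ℝ (Fin n) → ℝ)
    (gu : ∀ i : Fin N, EuclideanSpace ℝ {j : Fin n // blk j = i} →
      EuclideanSpace ℝ (Fin n) → EuclideanSpace ℝ {j : Fin n // blk j = i})
    (M μ : Fin N → ℝ) : Prop where
  strictConvexOn : ∀ i x, StrictConvexOn ℝ Set.univ (fun v => u i v x)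
  hasGradient : ∀ i x v, HasGradientAt (fun w => u i w x) (gu i v x) v
  continuous_second : ∀ i v, Continuous fun x => u i v x
  value_at : ∀ i x, u i (blkProj blk i x) x = f x
  gradient_at : ∀ i x, gu i (blkProj blk i x) x = blkProj blk i (g x)
  lipschitz_grad : ∀ i x v w, ‖gu i v x - gu i w x‖ ≤ M i * ‖v - w‖
  M_gt_L : ∀ i, L i < M i
  mu_pos : ∀ i, 0 < μ i
  mu_le : ∀ i, μ i ≤ M i - L i
  lower_bound : ∀ i x v,
    f (x + blkEmbed blk i (v - blkProj blk i x)) + μ i / 2 * ‖v - blkProj blk i x‖ ^ 2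
      ≤ u i v x

/-- `z` is a `u`-strong local minimizer: `F(z) ≤ min_{yᵢ} uᵢ(yᵢ;z) + ‖z + Uᵢ(yᵢ - zᵢ)‖_{0,λ}`
for all blocks `i`. -/
def IsUStrongLocalMin {n N : ℕ} (blk : Fin n → Fin N) (lam : Fin N → ℝ)
    (f : EuclideanSpace ℝ (Fin n) → ℝ)
    (u : ∀ i : Fin N, EuclideanSpace ℝ {j : Fin n // blk j = i} →
      EuclideanSpace ℝ (Fin n) → ℝ)
    (z : EuclideanSpace ℝ (Fin n)) : Prop :=
  ∀ (i : Fin N) (y : EuclideanSpace ℝ {j : Fin n // blk j = i}),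
    f z + l0norm blk lam z ≤
      u i y z + l0norm blk lam (z + blkEmbed blk i (y - blkProj blk i z))

/-- Under Assumptions 1 and 2, every `u`-strong local minimizer `z`
satisfies `∇_{(j)} f(z) = 0` for all `j ∈ I(z)`; hence `𝓛_u ⊆ 𝒯_f`. -/
theorem statement4 {n N : ℕ} (blk : Fin n → Fin N) (lam : Fin N → ℝ)
    (hlam : ∀ i, 0 ≤ lam i) (hlam_pos : ∃ i, 0 < lam i)
    (f : EuclideanSpace ℝ (Fin n) → ℝ)
    (g : EuclideanSpace ℝ (Fin n) → EuclideanSpace ℝ (Fin n))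
    (hconv : ConvexOn ℝ Set.univ f)
    (hgrad : ∀ x, HasGradientAt f (g x) x)
    (L : Fin N → ℝ) (hL : ∀ i, 0 < L i)
    (hLip : ∀ (i : Fin N) (x : EuclideanSpace ℝ (Fin n))
      (h : EuclideanSpace ℝ {j : Fin n // blk j = i}),
      ‖blkProj blk i (g (x + blkEmbed blk i h)) - blkProj blk i (g x)‖ ≤ L i * ‖h‖)
    (u : ∀ i : Fin N, EuclideanSpace ℝ {j : Fin n // blk j = i} →
      EuclideanSpace ℝ (Fin n) → ℝ)
    (gu : ∀ i : Fin N, EuclideanSpace ℝ {j : Fin n // blk j = i} →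
      EuclideanSpace ℝ (Fin n) → EuclideanSpace ℝ {j : Fin n // blk j = i})
    (M μ : Fin N → ℝ)
    (hu : ApproxAssumption blk f g L u gu M μ)
    (z : EuclideanSpace ℝ (Fin n))
    (hz : IsUStrongLocalMin blk lam f u z) :
    ∀ j, InIset blk lam z j → g z j = 0 := by
  intro j hj
  set i := blk j with hi
  set v0 : EuclideanSpace ℝ {k : Fin n // blk k = i} := blkProj blk i z with hv0
  set e : EuclideanSpace ℝ {k : Fin n // blk k = i} :=
    EuclideanSpace.single (⟨j, rfl⟩ : {k : Fin n // blk k = i}) (1 : ℝ) with he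
  -- the perturbed point z + t e_j
  have hembed : ∀ t : ℝ, ∀ k : Fin n,
      (z + blkEmbed blk i (v0 + t • e - v0)) k = z k + (if k = j then t else 0) := by
    intro t k
    have : (v0 + t • e - v0) = t • e := by abel
    rw [this]
    show z k + blkEmbed blk i (t • e) k = z k + (if k = j then t else 0)
    congr 1
    unfold blkEmbed
    by_cases h : blk k = i
    · simp only [h, dif_pos, WithLp.ofLp_toLp]
      have : (t • e) ⟨k, h⟩ = t * (if (⟨k, h⟩ : {m : Fin n // blk m = i}) = ⟨j, rfl⟩ then 1 else 0) := by
        rw [he]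
        simp [EuclideanSpace.single_apply]
      rw [this]
      by_cases hk : k = j
      · subst hk; simp
      · have hne : (⟨k, h⟩ : {m : Fin n // blk m = i}) ≠ ⟨j, rfl⟩ := by
          simp [Subtype.ext_iff, hk]
        simp [hne, hk]
    · have hk : k ≠ j := by rintro rfl; exact h rfl
      simp [h, hk]
  -- the l0 norm is unchanged for suitable t
  have hl0 : ∀ t : ℝ, (z j ≠ 0 → z j + t ≠ 0) →
      l0norm blk lam (z + blkEmbed blk i (v0 + t • e - v0)) = l0norm blk lam z := by
    intro t ht
    unfold l0norm
    refine Finset.sum_congr rfl ?_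
    intro k _
    rw [hembed t k]
    by_cases hk : k = j
    · subst hk
      have h1 : z k + (if k = k then t else 0) = z k + t := by simp
      rw [h1]
      rcases hj with hj | hj
      · rw [if_pos (ht hj), if_pos hj]
      · simp [hj]
    · simp [hk]
  -- f z ≤ u i (v0 + t • e) z for suitable t
  have hle : ∀ t : ℝ, (z j ≠ 0 → z j + t ≠ 0) → f z ≤ u i (v0 + t • e) z := by
    intro t ht
    have := hz i (v0 + t • e)
    rw [hl0 t ht] at this
    linarith
  -- ψ has a local min at 0
  have hloc : IsLocalMin (fun t : ℝ => u i (v0 + t • e) z) 0 := by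
    have h0 : u i (v0 + (0:ℝ) • e) z = f z := by
      simp only [zero_smul, add_zero]
      exact hu.value_at i z
    rw [IsLocalMin, IsMinFilter]
    have hev : ∀ᶠ t : ℝ in nhds 0, (z j ≠ 0 → z j + t ≠ 0) := by
      by_cases hzj : z j = 0
      · exact Filter.Eventually.of_forall (fun t h => absurd hzj h)
      · have : ∀ᶠ t : ℝ in nhds 0, |t| < |z j| := by
          have := eventually_abs_sub_lt (0:ℝ) (abs_pos.mpr hzj)
          simpa using this
        refine this.mono (fun t ht _ => ?_)
        intro hcon
        have : t = -(z j) := by linarith [eq_neg_of_add_eq_zero_right hcon]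
        rw [this, abs_neg] at ht
        exact lt_irrefl _ ht
    refine hev.mono (fun t ht => ?_)
    rw [h0]
    exact hle t ht
  -- the derivative of ψ at 0 is g z j
  have hline : HasDerivAt (fun t : ℝ => v0 + t • e) e 0 := by
    simpa using ((hasDerivAt_id (0:ℝ)).smul_const e).const_add v0
  have hgrad' : HasFDerivAt (fun w => u i w z)
      (InnerProductSpace.toDual ℝ _ (gu i v0 z)) v0 :=
    (hu.hasGradient i z v0).hasFDerivAt
  have hv0eq : v0 + (0:ℝ) • e = v0 := by simp
  have hderiv : HasDerivAt (fun t : ℝ => u i (v0 + t • e) z)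
      ((InnerProductSpace.toDual ℝ _ (gu i v0 z)) e) 0 := by
    have hgrad2 : HasFDerivAt (fun w => u i w z)
        (InnerProductSpace.toDual ℝ _ (gu i v0 z)) (v0 + (0:ℝ) • e) := by
      rw [hv0eq]; exact hgrad'
    exact hgrad2.comp_hasDerivAt (0:ℝ) hline
  have hzero := hloc.hasDerivAt_eq_zero hderiv
  have hinner : (InnerProductSpace.toDual ℝ _ (gu i v0 z)) e = g z j := by
    rw [InnerProductSpace.toDual_apply_apply]
    rw [he]
    rw [EuclideanSpace.inner_single_right]
    simp only [map_one, one_mul]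
    rw [hu.gradient_at i z]
    rfl
  rw [hinner] at hzero
  exact hzero
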